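/- Let d ≥ 1, m ≥ 0, X = [0,1]^d, and let f ∈ C^m(X). Then ‖exp(f)‖_{C^m} ≤ 2^{m(m−1)/2} · max{1, ‖f‖_{C^m}}^m · ‖exp(f)‖_∞, where exp(f) denotes the function x ↦ e^{f(x)}. -/

import Mathlib

open MeasureTheory Real

noncomputable section

/-- The unit cube `[0,1]^d` in `ℝ^d`. -/
def cube (d : ℕ) : Set (Fin d → ℝ) := Set.Icc 0 1

/-- Partial derivative of `h` in coordinate direction `i`. -/
def pderivCoord {d : ℕ} (i : Fin d) (h : (Fin d → ℝ) → ℝ) : (Fin d → ℝ) → ℝ :=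
  fun x => deriv (fun t => h (Function.update x i t)) (x i)

/-- Mixed partial derivative `∂^α h` for a multi-index `α ∈ ℕ₀^d`. -/
def pderivMulti {d : ℕ} (α : Fin d → ℕ) (h : (Fin d → ℝ) → ℝ) : (Fin d → ℝ) → ℝ :=
  (List.finRange d).foldr (fun i acc => (pderivCoord i)^[α i] acc) h

/-- The `C^m` norm on the cube:
`‖h‖_{C^m} = sup_{α : |α|₁ ≤ m} sup_{x ∈ [0,1]^d} |∂^α h(x)|`. -/
def CmNorm {d : ℕ} (m : ℕ) (h : (Fin d → ℝ) → ℝ) : ℝ :=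
  ⨆ α : {α : Fin d → ℕ // ∑ i, α i ≤ m}, ⨆ x : cube d, |pderivMulti α.1 h x.1|

namespace StatementAux

variable {d : ℕ}

/-- directional derivative in coordinate `i`. -/
def Di (i : Fin d) (h : (Fin d → ℝ) → ℝ) : (Fin d → ℝ) → ℝ :=
  fun x => fderiv ℝ h x (Pi.single i 1)

/-- iterated directional derivatives along a list. -/
def applyL : List (Fin d) → ((Fin d → ℝ) → ℝ) → ((Fin d → ℝ) → ℝ)
  | [], h => h
  | i :: L, h => Di i (applyL L h)

theorem pderivCoord_eq {i : Fin d} {h : (Fin d → ℝ) → ℝ} (hh : Differentiable ℝ h) :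
    pderivCoord i h = Di i h := by
  funext x
  have h1 : HasDerivAt (fun t => h (Function.update x i t)) (fderiv ℝ h x (Pi.single i 1)) (x i) := by
    have h2 := hasDerivAt_update x i (x i)
    have h3 : HasFDerivAt h (fderiv ℝ h x) (Function.update x i (x i)) := by
      rw [Function.update_eq_self]; exact (hh x).hasFDerivAt
    exact h3.comp_hasDerivAt (x i) h2
  exact h1.deriv

theorem contDiff_Di {i : Fin d} {h : (Fin d → ℝ) → ℝ} {n : ℕ}
    (hh : ContDiff ℝ (n + 1 : ℕ) h) : ContDiff ℝ (n : ℕ) (Di i h) := by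
  have h1 : ContDiff ℝ (n : ℕ) (fderiv ℝ h) := hh.fderiv_right (by exact_mod_cast le_refl _)
  exact (ContinuousLinearMap.apply ℝ ℝ (Pi.single i 1)).contDiff.comp h1

theorem contDiff_applyL {h : (Fin d → ℝ) → ℝ} {n : ℕ} (L : List (Fin d)) {k : ℕ}
    (hh : ContDiff ℝ (n : ℕ) h) (hk : L.length + k ≤ n) : ContDiff ℝ (k : ℕ) (applyL L h) := by
  induction L generalizing k with
  | nil => exact hh.of_le (by exact_mod_cast le_trans (Nat.le_add_left _ _) hk)
  | cons i L ih =>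
    have h1 : ContDiff ℝ ((k+1 : ℕ) : ℕ∞) (applyL L h) := ih (by simp at hk; omega)
    exact contDiff_Di h1

theorem differentiable_applyL {h : (Fin d → ℝ) → ℝ} {n : ℕ} (L : List (Fin d))
    (hh : ContDiff ℝ (n : ℕ) h) (hk : L.length < n) : Differentiable ℝ (applyL L h) :=
  (contDiff_applyL L hh (k := 1) (by omega)).differentiable (by norm_num)

theorem Di_apply_eq {i : Fin d} {g : (Fin d → ℝ) → ((Fin d → ℝ) →L[ℝ] ℝ)} {v : Fin d → ℝ}
    (hg : Differentiable ℝ g) (x : Fin d → ℝ) :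
    Di i (fun y => g y v) x = fderiv ℝ g x (Pi.single i 1) v := by
  have h1 : HasFDerivAt (fun y => g y v)
      ((ContinuousLinearMap.apply ℝ ℝ v).comp (fderiv ℝ g x)) x :=
    (ContinuousLinearMap.apply ℝ ℝ v).hasFDerivAt.comp x (hg x).hasFDerivAt
  simp [Di, h1.fderiv]

/-- Swap two directional derivatives (Clairaut). -/
theorem Di_comm {i j : Fin d} {h : (Fin d → ℝ) → ℝ} (hh : ContDiff ℝ 2 h) :
    Di i (Di j h) = Di j (Di i h) := by
  have hg : Differentiable ℝ (fderiv ℝ h) :=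
    (hh.fderiv_right (m := 1) (by norm_num)).differentiable (by norm_num)
  funext x
  have hs := (hh.contDiffAt (x := x)).isSymmSndFDerivAt (by simp)
  have e1 : Di i (Di j h) x = fderiv ℝ (fderiv ℝ h) x (Pi.single i 1) (Pi.single j 1) :=
    Di_apply_eq hg x
  have e2 : Di j (Di i h) x = fderiv ℝ (fderiv ℝ h) x (Pi.single j 1) (Pi.single i 1) :=
    Di_apply_eq hg x
  rw [e1, e2, hs.eq]

end StatementAux

namespace StatementAux2
open StatementAux

variable {d : ℕ}

theorem applyL_append (L₁ L₂ : List (Fin d)) (h : (Fin d → ℝ) → ℝ) :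
    applyL (L₁ ++ L₂) h = applyL L₁ (applyL L₂ h) := by
  induction L₁ with
  | nil => rfl
  | cons i L ih => simp [applyL, ih]

theorem applyL_perm {h : (Fin d → ℝ) → ℝ} {n : ℕ} (hh : ContDiff ℝ (n : ℕ) h)
    {L L' : List (Fin d)} (p : L.Perm L') (hl : L.length ≤ n) :
    applyL L h = applyL L' h := by
  induction p with
  | nil => rfl
  | cons x p ih =>
    simp only [applyL]
    rw [ih (by simp at hl; omega)]
  | swap x y l =>
    have h2 : ContDiff ℝ (2 : ℕ) (applyL l h) :=
      contDiff_applyL l hh (by simp at hl; omega)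
    show Di y (Di x (applyL l h)) = Di x (Di y (applyL l h))
    exact Di_comm (by exact_mod_cast h2)
  | trans p₁ p₂ ih₁ ih₂ =>
    rw [ih₁ hl, ih₂ (p₁.length_eq ▸ hl)]

def canonList (α : Fin d → ℕ) : List (Fin d) :=
  (List.finRange d).flatMap (fun i => List.replicate (α i) i)

theorem length_canonList (α : Fin d → ℕ) : (canonList α).length = ∑ i, α i := by
  rw [canonList, List.length_flatMap, Fin.sum_univ_def]
  simp [Function.comp_def]

theorem count_canonList (α : Fin d → ℕ) (j : Fin d) : (canonList α).count j = α j := by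
  rw [canonList, List.count_flatMap]
  have : ∀ i : Fin d, (List.replicate (α i) i).count j = if j = i then α i else 0 := by
    intro i
    rw [List.count_replicate]
    by_cases h : i = j
    · subst h; simp
    · simp [h, Ne.symm h]
  calc ((List.finRange d).map ((List.count j) ∘ fun i => List.replicate (α i) i)).sum
      = ((List.finRange d).map (fun i => if j = i then α i else 0)).sum := by
        congr 1; apply List.map_congr_left; intro i _; exact this i
    _ = ∑ i : Fin d, if j = i then α i else 0 := (Fin.sum_univ_def _).symm
    _ = α j := by simp

theorem perm_canonList (L : List (Fin d)) :
    (canonList (fun i => L.count i)).Perm L := by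
  rw [List.perm_iff_count]
  intro a
  rw [count_canonList]

theorem iterate_pderivCoord {i : Fin d} {g : (Fin d → ℝ) → ℝ} {n k : ℕ}
    (hg : ContDiff ℝ (n : ℕ) g) (hk : k ≤ n) :
    (pderivCoord i)^[k] g = applyL (List.replicate k i) g := by
  induction k with
  | zero => rfl
  | succ k ih =>
    rw [Function.iterate_succ_apply', ih (by omega)]
    show pderivCoord i (applyL (List.replicate k i) g) = Di i (applyL (List.replicate k i) g)
    exact pderivCoord_eq (differentiable_applyL _ hg (by simp; omega))

theorem pderivMulti_eq_applyL {h : (Fin d → ℝ) → ℝ} {n : ℕ} (hh : ContDiff ℝ (n : ℕ) h)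
    (α : Fin d → ℕ) (hα : ∑ i, α i ≤ n) :
    pderivMulti α h = applyL (canonList α) h := by
  rw [pderivMulti, canonList]
  have key : ∀ l : List (Fin d), ((l.map α).sum ≤ n) →
      l.foldr (fun i acc => (pderivCoord i)^[α i] acc) h
        = applyL (l.flatMap fun i => List.replicate (α i) i) h := by
    intro l
    induction l with
    | nil => intro _; rfl
    | cons i l ih =>
      intro hsum
      simp only [List.map_cons, List.sum_cons] at hsum
      have hsum2 : (List.map α l).sum = (List.map (fun x => α x) l).sum := rfl
      rw [List.foldr_cons, ih (by omega), List.flatMap_cons, applyL_append]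
      have hg : ContDiff ℝ ((n - (l.map α).sum : ℕ) : ℕ∞)
          (applyL (l.flatMap fun i => List.replicate (α i) i) h) := by
        apply contDiff_applyL _ hh
        rw [List.length_flatMap]
        simp only [Function.comp_def, List.length_replicate]
        omega
      exact iterate_pderivCoord hg (by omega)
  apply key
  rw [← Fin.sum_univ_def]; exact hα

end StatementAux2

namespace StatementAux3
open StatementAux StatementAux2

variable {d : ℕ}

def newTerms (i : Fin d) : List (List (Fin d)) → List (List (List (Fin d)))
  | [] => []
  | B :: t => ((i :: B) :: t) :: (newTerms i t).map (fun t' => B :: t')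

def step (i : Fin d) (T : List (List (List (Fin d)))) : List (List (List (Fin d))) :=
  T.flatMap fun t => (t ++ [[i]]) :: newTerms i t

def TL : List (Fin d) → List (List (List (Fin d)))
  | [] => [[]]
  | i :: L => step i (TL L)

def Pt (f : (Fin d → ℝ) → ℝ) (t : List (List (Fin d))) : (Fin d → ℝ) → ℝ :=
  fun x => (t.map (fun B => applyL B f x)).prod

theorem length_newTerms (i : Fin d) (t : List (List (Fin d))) :
    (newTerms i t).length = t.length := by
  induction t with
  | nil => rfl
  | cons B t ih => simp [newTerms, ih]

theorem mem_newTerms_length {i : Fin d} {t t' : List (List (Fin d))}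
    (h : t' ∈ newTerms i t) : t'.length = t.length := by
  induction t generalizing t' with
  | nil => simp [newTerms] at h
  | cons B t ih =>
    simp only [newTerms, List.mem_cons, List.mem_map] at h
    rcases h with rfl | ⟨t₀, ht₀, rfl⟩
    · simp
    · simp [ih ht₀]

def Ok (k : ℕ) (t : List (List (Fin d))) : Prop :=
  t.length ≤ k ∧ ∀ B ∈ t, B ≠ [] ∧ B.length ≤ k

theorem ok_newTerms {i : Fin d} {k : ℕ} : ∀ {t : List (List (Fin d))}, Ok k t →
    ∀ t' ∈ newTerms i t, Ok (k + 1) t' := by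
  intro t
  induction t with
  | nil => intro _ t' ht'; simp [newTerms] at ht'
  | cons B t ih =>
    rintro ⟨hlen, hblk⟩ t' ht'
    simp only [newTerms, List.mem_cons, List.mem_map] at ht'
    simp only [List.length_cons] at hlen
    rcases ht' with rfl | ⟨t₀, ht₀, rfl⟩
    · refine ⟨by simp; omega, ?_⟩
      intro C hC
      rcases List.mem_cons.mp hC with rfl | hC
      · have := hblk B (List.mem_cons_self)
        exact ⟨by simp, by simp; omega⟩
      · have := hblk C (List.mem_cons_of_mem _ hC)
        exact ⟨this.1, by omega⟩
    · have hOk : Ok k t := ⟨by omega, fun C hC => hblk C (List.mem_cons_of_mem _ hC)⟩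
      have h₀ := ih hOk t₀ ht₀
      have hlen₀ : t₀.length = t.length := mem_newTerms_length ht₀
      refine ⟨by simp; omega, ?_⟩
      intro C hC
      rcases List.mem_cons.mp hC with rfl | hC
      · have := hblk C (List.mem_cons_self)
        exact ⟨this.1, by omega⟩
      · exact h₀.2 C hC

theorem ok_TL : ∀ (L : List (Fin d)), ∀ t ∈ TL L, Ok L.length t := by
  intro L
  induction L with
  | nil =>
    intro t ht
    simp only [TL, List.mem_singleton] at ht
    subst ht
    exact ⟨by simp, by simp⟩
  | cons i L ih =>
    intro t ht
    simp only [TL, step, List.mem_flatMap, List.mem_cons] at ht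
    obtain ⟨t₀, ht₀, h⟩ := ht
    have hOk := ih t₀ ht₀
    have hl1 := hOk.1
    rcases h with rfl | h
    · refine ⟨by simp; omega, ?_⟩
      · intro B hB
        rcases List.mem_append.mp hB with hB | hB
        · have := hOk.2 B hB
          exact ⟨this.1, by simp; omega⟩
        · simp at hB; subst hB; exact ⟨by simp, by simp⟩
    · simpa using ok_newTerms hOk t h

theorem tri_step (k : ℕ) : k * (k - 1) / 2 + k = (k + 1) * k / 2 := by
  cases k with
  | zero => rfl
  | succ j =>
    obtain ⟨c, hc⟩ := Nat.even_mul_succ_self j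
    have h1 : (j + 1) * j = j * (j + 1) := by ring
    have h2 : (j + 1 + 1) * (j + 1) = j * (j + 1) + 2 * (j + 1) := by ring
    simp only [Nat.add_sub_cancel]
    omega

theorem length_TL (L : List (Fin d)) :
    (TL L).length ≤ 2 ^ (L.length * (L.length - 1) / 2) := by
  induction L with
  | nil => simp [TL]
  | cons i L ih =>
    have hstep : (TL (i :: L)).length ≤ (TL L).length * (L.length + 1) := by
      show (step i (TL L)).length ≤ _
      rw [step, List.length_flatMap]
      calc (List.map (fun t => ((t ++ [[i]]) :: newTerms i t).length) (TL L)).sum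
          ≤ (List.map (fun t => ((t ++ [[i]]) :: newTerms i t).length) (TL L)).length
              • (L.length + 1) := by
            apply List.sum_le_card_nsmul
            intro a ha
            simp only [List.mem_map] at ha
            obtain ⟨t, ht, rfl⟩ := ha
            have := (ok_TL L t ht).1
            simp [length_newTerms]; omega
        _ = (TL L).length * (L.length + 1) := by simp [smul_eq_mul]
    calc (TL (i :: L)).length ≤ (TL L).length * (L.length + 1) := hstep
      _ ≤ 2 ^ (L.length * (L.length - 1) / 2) * 2 ^ L.length := by
          apply Nat.mul_le_mul ih
          have : L.length < 2 ^ L.length := Nat.lt_two_pow_self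
          omega
      _ = 2 ^ (L.length * (L.length - 1) / 2 + L.length) := by rw [pow_add]
      _ = 2 ^ ((i :: L).length * ((i :: L).length - 1) / 2) := by
          rw [tri_step]
          simp

end StatementAux3

namespace StatementAux4
open StatementAux StatementAux2 StatementAux3

variable {d : ℕ}

theorem Di_const (i : Fin d) (c : ℝ) : Di i (fun _ => c) = fun _ => 0 := by
  funext x
  simp [Di, fderiv_const]

theorem Di_mul {i : Fin d} {u v : (Fin d → ℝ) → ℝ} {x : Fin d → ℝ}
    (hu : DifferentiableAt ℝ u x) (hv : DifferentiableAt ℝ v x) :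
    Di i (fun y => u y * v y) x = Di i u x * v x + u x * Di i v x := by
  simp only [Di, fderiv_fun_mul hu hv]
  simp [ContinuousLinearMap.add_apply, ContinuousLinearMap.smul_apply, smul_eq_mul]
  ring

theorem Di_listSum {ι : Type*} {i : Fin d} (T : List ι) (F : ι → (Fin d → ℝ) → ℝ)
    (x : Fin d → ℝ) (hF : ∀ t ∈ T, DifferentiableAt ℝ (F t) x) :
    DifferentiableAt ℝ (fun y => (T.map (fun t => F t y)).sum) x ∧
      Di i (fun y => (T.map (fun t => F t y)).sum) x = (T.map (fun t => Di i (F t) x)).sum := by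
  induction T with
  | nil =>
    constructor
    · simpa using differentiableAt_const (0 : ℝ)
    · show Di i (fun _ => (0:ℝ)) x = 0
      rw [Di_const]
  | cons a T ih =>
    have hT := ih (fun t ht => hF t (List.mem_cons_of_mem _ ht))
    have ha := hF a (List.mem_cons_self)
    constructor
    · exact ha.add hT.1
    · show Di i (fun y => F a y + (T.map (fun t => F t y)).sum) x = _
      have : Di i (fun y => F a y + (T.map (fun t => F t y)).sum) x
          = Di i (F a) x + Di i (fun y => (T.map (fun t => F t y)).sum) x := by
        simp only [Di, fderiv_fun_add ha hT.1]
        simp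
      rw [this, hT.2]
      simp

theorem Pt_diff_and_Di {f : (Fin d → ℝ) → ℝ} (i : Fin d) :
    ∀ (t : List (List (Fin d))), (∀ B ∈ t, Differentiable ℝ (applyL B f)) →
    Differentiable ℝ (Pt f t) ∧
      ∀ x, Di i (Pt f t) x = ((newTerms i t).map (fun t' => Pt f t' x)).sum := by
  intro t
  induction t with
  | nil =>
    intro _
    constructor
    · exact differentiable_const 1
    · intro x
      show Di i (fun _ => (1:ℝ)) x = 0
      rw [Di_const]
  | cons B t ih =>
    intro hblk
    have hB : Differentiable ℝ (applyL B f) := hblk B (List.mem_cons_self)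
    have ht := ih (fun C hC => hblk C (List.mem_cons_of_mem _ hC))
    constructor
    · exact hB.mul ht.1
    · intro x
      have e1 : Di i (Pt f (B :: t)) x
          = Di i (applyL B f) x * Pt f t x + applyL B f x * Di i (Pt f t) x :=
        Di_mul (hB x) (ht.1 x)
      rw [e1, ht.2 x]
      show _ = ((((i :: B) :: t) :: (newTerms i t).map (fun t' => B :: t')).map
        (fun t' => Pt f t' x)).sum
      rw [List.map_cons, List.sum_cons, List.map_map]
      have e2 : Pt f ((i :: B) :: t) x = Di i (applyL B f) x * Pt f t x := rfl
      have e3 : ((newTerms i t).map ((fun t' => Pt f t' x) ∘ fun t' => B :: t')).sum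
          = applyL B f x * ((newTerms i t).map (fun t' => Pt f t' x)).sum := by
        rw [← List.sum_map_mul_left]
        exact congrArg List.sum (List.map_congr_left (fun t' _ => rfl))
      rw [e2, e3]

theorem sum_map_flatMap {A B : Type*} (T : List A) (k : A → List B) (g : B → ℝ) :
    ((T.flatMap k).map g).sum = (T.map (fun t => ((k t).map g).sum)).sum := by
  induction T with
  | nil => rfl
  | cons a T ih => simp [List.flatMap_cons, ih]

theorem applyL_exp {m : ℕ} {f : (Fin d → ℝ) → ℝ} (hf : ContDiff ℝ (m : ℕ) f) :
    ∀ (L : List (Fin d)), L.length ≤ m → ∀ x,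
      applyL L (fun y => Real.exp (f y)) x
        = ((TL L).map (fun t => Pt f t x)).sum * Real.exp (f x) := by
  intro L
  induction L with
  | nil =>
    intro _ x
    show Real.exp (f x) = _
    simp [TL, Pt]
  | cons i L ih =>
    intro hlen x
    simp only [List.length_cons] at hlen
    have hm1 : 1 ≤ m := by omega
    have hfd : Differentiable ℝ f := hf.differentiable (by exact_mod_cast (show m ≠ 0 by omega))
    have hblk : ∀ t ∈ TL L, ∀ B ∈ t, Differentiable ℝ (applyL B f) := by
      intro t ht B hB
      have hOk := ok_TL L t ht
      have := (hOk.2 B hB).2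
      exact differentiable_applyL B hf (by omega)
    have IH : applyL L (fun y => Real.exp (f y))
        = fun y => ((TL L).map (fun t => Pt f t y * Real.exp (f y))).sum := by
      funext y
      rw [ih (by omega) y, ← List.sum_map_mul_right]
    show Di i (applyL L (fun y => Real.exp (f y))) x = _
    rw [IH]
    have hdiff : ∀ t ∈ TL L, DifferentiableAt ℝ (fun y => Pt f t y * Real.exp (f y)) x := by
      intro t ht
      exact (((Pt_diff_and_Di i t (hblk t ht)).1 x).mul
        ((Real.differentiable_exp.comp hfd) x))
    rw [(Di_listSum (TL L) (fun t y => Pt f t y * Real.exp (f y)) x hdiff).2]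
    have key : ∀ t ∈ TL L,
        Di i (fun y => Pt f t y * Real.exp (f y)) x
          = (((t ++ [[i]]) :: newTerms i t).map (fun t' => Pt f t' x)).sum * Real.exp (f x) := by
      intro t ht
      have hPt := Pt_diff_and_Di i t (hblk t ht)
      have e1 : Di i (fun y => Pt f t y * Real.exp (f y)) x
          = Di i (Pt f t) x * Real.exp (f x)
            + Pt f t x * Di i (fun y => Real.exp (f y)) x :=
        Di_mul (hPt.1 x) ((Real.differentiable_exp.comp hfd) x)
      have e2 : Di i (fun y => Real.exp (f y)) x = Real.exp (f x) * Di i f x := by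
        simp only [Di]
        rw [fderiv_exp (hfd x)]
        simp
      have e3 : Pt f (t ++ [[i]]) x = Pt f t x * Di i f x := by
        show ((t ++ [[i]]).map (fun B => applyL B f x)).prod = _
        rw [List.map_append, List.prod_append]
        simp [Pt, applyL]
      rw [e1, e2, hPt.2 x, List.map_cons, List.sum_cons, e3]
      ring
    rw [List.map_congr_left key]
    have e4 : ((TL (i :: L)).map (fun t => Pt f t x)).sum
        = ((TL L).map
            (fun t => (((t ++ [[i]]) :: newTerms i t).map (fun t' => Pt f t' x)).sum)).sum := by
      show ((step i (TL L)).map (fun t => Pt f t x)).sum = _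
      rw [step, sum_map_flatMap]
    rw [List.sum_map_mul_right, e4]

end StatementAux4


namespace StatementAux5
open StatementAux StatementAux2 StatementAux3 StatementAux4

variable {d : ℕ}

theorem abs_list_sum_le (l : List ℝ) (C : ℝ) (hC : 0 ≤ C) (h : ∀ a ∈ l, |a| ≤ C) :
    |l.sum| ≤ l.length * C := by
  induction l with
  | nil => simp [hC]
  | cons a l ih =>
    have h1 : |a + l.sum| ≤ |a| + |l.sum| := abs_add_le _ _
    have h2 := ih (fun b hb => h b (List.mem_cons_of_mem _ hb))
    have h3 := h a (List.mem_cons_self)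
    simp only [List.sum_cons, List.length_cons]
    push_cast
    nlinarith

theorem abs_list_prod_le (l : List ℝ) (C : ℝ) (hC : 1 ≤ C) (h : ∀ a ∈ l, |a| ≤ C) :
    |l.prod| ≤ C ^ l.length := by
  induction l with
  | nil => simp
  | cons a l ih =>
    have h2 := ih (fun b hb => h b (List.mem_cons_of_mem _ hb))
    have h3 := h a (List.mem_cons_self)
    simp only [List.prod_cons, List.length_cons, abs_mul, pow_succ]
    have h4 : |a| * |l.prod| ≤ C * C ^ l.length :=
      mul_le_mul h3 h2 (abs_nonneg _) (le_trans zero_le_one hC)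
    calc |a| * |l.prod| ≤ C * C ^ l.length := h4
      _ = C ^ l.length * C := by ring

instance cube_nonempty : Nonempty (cube d) :=
  ⟨⟨0, Set.mem_Icc.mpr ⟨le_rfl, zero_le_one⟩⟩⟩

theorem bdd_cube {g : (Fin d → ℝ) → ℝ} (hg : Continuous g) :
    BddAbove (Set.range fun x : cube d => |g x.1|) := by
  have h1 : IsCompact (cube d) := isCompact_Icc
  have h2 := h1.bddAbove_image (hg.abs.continuousOn)
  rwa [Set.image_eq_range] at h2

instance finite_multi {m : ℕ} : Finite {α : Fin d → ℕ // ∑ i, α i ≤ m} := by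
  apply Finite.of_injective (fun a => (fun i => (⟨a.1 i, by
    have h1 : a.1 i ≤ ∑ j, a.1 j :=
      Finset.single_le_sum (fun j _ => Nat.zero_le _) (Finset.mem_univ i)
    have := a.2
    omega⟩ : Fin (m + 1))))
  intro a b hab
  apply Subtype.ext
  funext i
  have := congrFun hab i
  simpa [Fin.mk.injEq] using this

theorem le_CmNorm {m : ℕ} {f : (Fin d → ℝ) → ℝ} (hf : ContDiff ℝ (m : ℕ) f)
    (β : Fin d → ℕ) (hβ : ∑ i, β i ≤ m) {x : Fin d → ℝ} (hx : x ∈ cube d) :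
    |pderivMulti β f x| ≤ CmNorm m f := by
  have hcont : Continuous (pderivMulti β f) := by
    rw [pderivMulti_eq_applyL hf β hβ]
    exact (contDiff_applyL _ hf (k := 0) (by rw [length_canonList]; omega)).continuous
  have h1 : |pderivMulti β f x| ≤ ⨆ y : cube d, |pderivMulti β f y.1| :=
    le_ciSup (bdd_cube hcont) (⟨x, hx⟩ : cube d)
  have h2 : (⨆ y : cube d, |pderivMulti β f y.1|) ≤ CmNorm m f :=
    le_ciSup (f := fun α : {α : Fin d → ℕ // ∑ i, α i ≤ m} =>
      ⨆ y : cube d, |pderivMulti α.1 f y.1|)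
      (Set.Finite.bddAbove (Set.finite_range _)) ⟨β, hβ⟩
  linarith

end StatementAux5

open StatementAux StatementAux2 StatementAux3 StatementAux4 StatementAux5 in
/-- Lemma D.8: for `f ∈ C^m([0,1]^d)`,
`‖e^f‖_{C^m} ≤ 2^{m(m−1)/2} max{1, ‖f‖_{C^m}}^m ‖e^f‖_∞`. -/
theorem cmNorm_exp_le (d m : ℕ) (hd : 1 ≤ d) (f : (Fin d → ℝ) → ℝ)
    (hf : ContDiff ℝ m f) :
    CmNorm m (fun x => Real.exp (f x)) ≤
      2 ^ (m * (m - 1) / 2) * max 1 (CmNorm m f) ^ m *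
        ⨆ x : cube d, |Real.exp (f x.1)| := by
  set M : ℝ := max 1 (CmNorm m f) with hM
  set S : ℝ := ⨆ x : cube d, |Real.exp (f x.1)| with hS
  have hM1 : (1 : ℝ) ≤ M := le_max_left _ _
  have hM0 : (0 : ℝ) ≤ M := le_trans zero_le_one hM1
  have hexp : ContDiff ℝ (m : ℕ) (fun y => Real.exp (f y)) := Real.contDiff_exp.comp hf
  have hSbdd : BddAbove (Set.range fun x : cube d => |Real.exp (f x.1)|) :=
    bdd_cube hexp.continuous
  have hSle : ∀ x : Fin d → ℝ, x ∈ cube d → Real.exp (f x) ≤ S := by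
    intro x hx
    have := le_ciSup hSbdd (⟨x, hx⟩ : cube d)
    rwa [abs_of_pos (Real.exp_pos _)] at this
  have key : ∀ (α : Fin d → ℕ), ∑ i, α i ≤ m → ∀ x ∈ cube d,
      |pderivMulti α (fun y => Real.exp (f y)) x|
        ≤ 2 ^ (m * (m - 1) / 2) * M ^ m * S := by
    intro α hα x hx
    rw [pderivMulti_eq_applyL hexp α hα]
    have hLlen : (canonList α).length ≤ m := by rw [length_canonList]; exact hα
    rw [applyL_exp hf (canonList α) hLlen x, abs_mul, abs_of_pos (Real.exp_pos _)]
    set L := canonList α with hLdef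
    have hterm : ∀ t ∈ TL L, |Pt f t x| ≤ M ^ m := by
      intro t ht
      have hOk := ok_TL L t ht
      have hprod : |Pt f t x| ≤ M ^ (t.map (fun B => applyL B f x)).length := by
        apply abs_list_prod_le _ _ hM1
        intro a ha
        obtain ⟨B, hB, rfl⟩ := List.mem_map.mp ha
        have hBlen : B.length ≤ m := le_trans (hOk.2 B hB).2 hLlen
        have hsum : ∑ j, B.count j ≤ m := by
          have h1 : (canonList fun j => B.count j).length = ∑ j, B.count j :=
            length_canonList _
          have h2 : (canonList fun j => B.count j).length = B.length :=
            (perm_canonList B).length_eq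
          omega
        have hperm : applyL B f = applyL (canonList fun j => B.count j) f :=
          applyL_perm hf (perm_canonList B).symm hBlen
        have hle := le_CmNorm hf (fun j => B.count j) hsum hx
        rw [pderivMulti_eq_applyL hf _ hsum] at hle
        rw [hperm]
        exact le_trans hle (le_max_right _ _)
      rw [List.length_map] at hprod
      calc |Pt f t x| ≤ M ^ t.length := hprod
        _ ≤ M ^ m := pow_le_pow_right₀ hM1 (le_trans hOk.1 hLlen)
    have hsumbound : |((TL L).map fun t => Pt f t x).sum|
        ≤ ((TL L).length : ℝ) * M ^ m := by
      have h1 := abs_list_sum_le ((TL L).map fun t => Pt f t x) (M ^ m)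
        (by positivity) (by
          intro a ha
          obtain ⟨t, ht, rfl⟩ := List.mem_map.mp ha
          exact hterm t ht)
      rwa [List.length_map] at h1
    have hlen2 : ((TL L).length : ℝ) ≤ 2 ^ (m * (m - 1) / 2) := by
      have h1 : (TL L).length ≤ 2 ^ (m * (m - 1) / 2) := by
        refine le_trans (length_TL L) (Nat.pow_le_pow_right (by norm_num) ?_)
        exact Nat.div_le_div_right (Nat.mul_le_mul hLlen (Nat.sub_le_sub_right hLlen 1))
      calc ((TL L).length : ℝ) ≤ ((2 ^ (m * (m - 1) / 2) : ℕ) : ℝ) := Nat.cast_le.mpr h1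
        _ = 2 ^ (m * (m - 1) / 2) := by push_cast; ring
    calc |((TL L).map fun t => Pt f t x).sum| * Real.exp (f x)
        ≤ (((TL L).length : ℝ) * M ^ m) * Real.exp (f x) :=
          mul_le_mul_of_nonneg_right hsumbound (Real.exp_pos _).le
      _ ≤ (2 ^ (m * (m - 1) / 2) * M ^ m) * Real.exp (f x) := by
          apply mul_le_mul_of_nonneg_right _ (Real.exp_pos _).le
          exact mul_le_mul_of_nonneg_right hlen2 (by positivity)
      _ ≤ 2 ^ (m * (m - 1) / 2) * M ^ m * S :=
          mul_le_mul_of_nonneg_left (hSle x hx) (by positivity)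
  haveI : Nonempty {α : Fin d → ℕ // ∑ i, α i ≤ m} := ⟨⟨fun _ => 0, by simp⟩⟩
  show (⨆ α : {α : Fin d → ℕ // ∑ i, α i ≤ m},
      ⨆ x : cube d, |pderivMulti α.1 (fun y => Real.exp (f y)) x.1|) ≤ _
  apply ciSup_le
  intro α
  apply ciSup_le
  intro x
  exact key α.1 α.2 x.1 x.2
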